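/- The function p ↦ Vol(B^n_p) · Vol((B^n_p)°) is strictly monotone increasing on the interval [1, 2] for every integer n ≥ 2. -/

import Mathlib

open MeasureTheory
open scoped ENNReal

/-- The open unit ball of the `l^p` norm in `ℝ^n`, for `p ∈ [1, ∞]`. -/
noncomputable def lpBall (n : ℕ) (p : ℝ≥0∞) : Set (Fin n → ℝ) :=
  if p = ⊤ then {x | ∀ i, |x i| < 1} else {x | ∑ i, |x i| ^ p.toReal < 1}

/-- The polar of a subset of `ℝ^n` with respect to the Euclidean inner product. -/
def polarSet {n : ℕ} (S : Set (Fin n → ℝ)) : Set (Fin n → ℝ) :=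
  {x | ∀ y ∈ S, ∑ i, y i * x i ≤ 1}


open Finset Real Filter Topology

noncomputable def mahδ (N : ℝ) : ℝ := 1/((1 + N/2)^2 * (2 + N/2))
noncomputable def cMah (N : ℝ) : ℝ := N^2 * mahδ N / 2

noncomputable def mahD (N : ℝ) (m : ℕ) (s : ℝ) : ℝ :=
  ∑ j ∈ Finset.range (m+1),
    (N/(1 + N*s + j) - N/(N + 1 - N*s + j) - N/(1 + s + j) + N/(2 - s + j))

lemma telescope_sum (t : ℝ) (ht : 0 ≤ t) (M : ℕ) :
    ∑ j ∈ Finset.range M, (1:ℝ) / ((j + 1 + t) * (j + 2 + t)) = 1 / (1 + t) - 1 / (M + 1 + t) := by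
  induction M with
  | zero => simp
  | succ M ih =>
    rw [Finset.sum_range_succ, ih]
    have h1 : (M:ℝ) + 1 + t > 0 := by positivity
    have h2 : (M:ℝ) + 2 + t > 0 := by positivity
    push_cast
    field_simp
    ring

lemma mahδ_pos {N : ℝ} (hN : 2 ≤ N) : 0 < mahδ N := by
  unfold mahδ; positivity

lemma cMah_pos {N : ℝ} (hN : 2 ≤ N) : 0 < cMah N := by
  have := mahδ_pos hN
  unfold cMah
  positivity

set_option maxHeartbeats 1000000 in
lemma mahD_le {N s : ℝ} (hN : 2 ≤ N) (hs0 : (1:ℝ)/2 ≤ s) (hs1 : s ≤ 1) {m : ℕ}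
    (hm : 2/mahδ N ≤ m) : mahD N m s ≤ -(cMah N * (2*s - 1)) := by
  have hNpos : (0:ℝ) < N := by linarith
  set t := N/2 with ht
  have ht1 : 1 ≤ t := by simp only [ht]; linarith
  have htpos : 0 < t := by linarith
  have hδ : mahδ N = 1/((1+t)^2*(2+t)) := rfl
  have hδpos : 0 < mahδ N := mahδ_pos hN
  have p1 : ∀ j : ℕ, (0:ℝ) < 1 + N*s + j := fun j => by
    have h1 : (0:ℝ) ≤ N*s := by positivity
    have h2 : (0:ℝ) ≤ (j:ℝ) := j.cast_nonneg
    linarith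
  have p2 : ∀ j : ℕ, (0:ℝ) < N + 1 - N*s + j := fun j => by
    have h1 : N*s ≤ N := by nlinarith
    have h2 : (0:ℝ) ≤ (j:ℝ) := j.cast_nonneg
    linarith
  have p3 : ∀ j : ℕ, (0:ℝ) < 1 + s + j := fun j => by
    have h2 : (0:ℝ) ≤ (j:ℝ) := j.cast_nonneg
    linarith
  have p4 : ∀ j : ℕ, (0:ℝ) < 2 - s + j := fun j => by
    have h2 : (0:ℝ) ≤ (j:ℝ) := j.cast_nonneg
    linarith
  set S1 : ℝ := ∑ j ∈ Finset.range (m+1), 1/((1 + s + j)*(2 - s + j)) with hS1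
  set S2 : ℝ := ∑ j ∈ Finset.range (m+1), 1/((1 + N*s + j)*(N + 1 - N*s + j)) with hS2
  have hre : mahD N m s = (2*s - 1) * (N * S1 - N^2 * S2) := by
    rw [hS1, hS2, Finset.mul_sum, Finset.mul_sum, ← Finset.sum_sub_distrib, Finset.mul_sum]
    unfold mahD
    refine Finset.sum_congr rfl (fun j _ => ?_)
    have h1 := (p1 j).ne'
    have h2 := (p2 j).ne'
    have h3 := (p3 j).ne'
    have h4 := (p4 j).ne'
    field_simp
    ring
  have hS1le : S1 ≤ 1 := by
    have h : S1 ≤ ∑ j ∈ Finset.range (m+1), (1:ℝ)/((j + 1 + 0)*(j + 2 + 0)) := by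
      rw [hS1]
      refine Finset.sum_le_sum (fun j _ => ?_)
      have hj : (0:ℝ) ≤ (j:ℝ) := j.cast_nonneg
      have hnum : ((j:ℝ) + 1 + 0)*((j:ℝ) + 2 + 0) ≤ (1 + s + j)*(2 - s + j) := by nlinarith
      have hpos : (0:ℝ) < ((j:ℝ) + 1 + 0)*((j:ℝ) + 2 + 0) := by positivity
      exact one_div_le_one_div_of_le hpos hnum
    rw [telescope_sum 0 le_rfl (m+1)] at h
    have hp : (0:ℝ) < ((m+1:ℕ):ℝ) + 1 + 0 := by positivity
    have h2 : (0:ℝ) ≤ 1/(((m+1:ℕ):ℝ) + 1 + 0) := by positivity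
    linarith
  have hS2ge : mahδ N + (1/(1+t) - 1/((m+1:ℕ) + 1 + t)) ≤ S2 := by
    have key : ∀ j ∈ Finset.range (m+1),
        ((1:ℝ)/((j + 1 + t)*(j + 2 + t)) + (if j = 0 then mahδ N else 0))
          ≤ 1/((1 + N*s + j)*(N + 1 - N*s + j)) := by
      intro j _
      have hj : (0:ℝ) ≤ (j:ℝ) := j.cast_nonneg
      have hb : (1 + N*s + j)*(N + 1 - N*s + j) ≤ ((j:ℝ) + 1 + t)^2 := by
        rw [ht]
        nlinarith [sq_nonneg (N*s - N/2)]
      have hbpos : (0:ℝ) < (1 + N*s + j)*(N + 1 - N*s + j) := mul_pos (p1 j) (p2 j)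
      have base : (1:ℝ)/(((j:ℝ) + 1 + t)^2) ≤ 1/((1 + N*s + j)*(N + 1 - N*s + j)) :=
        one_div_le_one_div_of_le hbpos hb
      rcases Nat.eq_zero_or_pos j with hj0 | hjpos
      · subst hj0
        simp only [if_pos rfl, Nat.cast_zero] at base ⊢
        have heq : (1:ℝ)/((0 + 1 + t)*(0 + 2 + t)) + mahδ N = 1/((0+1+t)^2) := by
          rw [hδ]
          have g1 : (0:ℝ) < 1 + t := by linarith
          have g2 : (0:ℝ) < 2 + t := by linarith
          field_simp
          ring
        rw [show ((0:ℝ) + 1 + t) = (0 + 1 + t) from rfl] at heq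
        calc (1:ℝ)/((0 + 1 + t)*(0 + 2 + t)) + mahδ N = 1/((0+1+t)^2) := heq
        _ ≤ _ := by simpa using base
      · rw [if_neg (Nat.pos_iff_ne_zero.mp hjpos), add_zero]
        refine le_trans ?_ base
        have hmono : ((j:ℝ) + 1 + t)^2 ≤ ((j:ℝ) + 1 + t)*((j:ℝ) + 2 + t) := by nlinarith
        exact one_div_le_one_div_of_le (by positivity) hmono
    have hsum := Finset.sum_le_sum key
    have hlhs : ∑ j ∈ Finset.range (m+1),
        ((1:ℝ)/((j + 1 + t)*(j + 2 + t)) + (if j = 0 then mahδ N else 0))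
        = (1/(1+t) - 1/((m+1:ℕ) + 1 + t)) + mahδ N := by
      rw [Finset.sum_add_distrib, telescope_sum t (by linarith) (m+1),
        Finset.sum_ite_eq' (Finset.range (m+1)) 0 (fun _ => mahδ N)]
      simp
    rw [hlhs] at hsum
    rw [hS2]
    linarith
  rw [hre]
  have h2s : 0 ≤ 2*s - 1 := by linarith
  have hM : (2:ℝ)/mahδ N ≤ ((m+1:ℕ):ℝ) + 1 + t := by
    have hmr : (2:ℝ)/mahδ N ≤ m := hm
    push_cast
    linarith
  have hfrac : 1/(((m+1:ℕ):ℝ) + 1 + t) ≤ mahδ N / 2 := by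
    have hMpos : (0:ℝ) < ((m+1:ℕ):ℝ) + 1 + t := by positivity
    rw [div_le_div_iff₀ hMpos (by norm_num)]
    have h2 : (2:ℝ) = 2/mahδ N * mahδ N := by field_simp
    nlinarith
  have hkey : N * S1 - N^2 * S2 ≤ -(cMah N) := by
    have hS2' : N^2 * (mahδ N + (1/(1+t) - 1/(((m+1:ℕ):ℝ) + 1 + t))) ≤ N^2 * S2 :=
      mul_le_mul_of_nonneg_left hS2ge (by positivity)
    have hexp : N^2 * (mahδ N + (1/(1+t) - 1/(((m+1:ℕ):ℝ) + 1 + t)))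
        = N^2 * mahδ N + N^2 * (1/(1+t)) - N^2 * (1/(((m+1:ℕ):ℝ) + 1 + t)) := by ring
    rw [hexp] at hS2'
    have hS1' : N * S1 ≤ N * 1 := mul_le_mul_of_nonneg_left hS1le (le_of_lt hNpos)
    have hNN : N ≤ N^2 * (1/(1+t)) := by
      rw [mul_one_div, le_div_iff₀ (show (0:ℝ) < 1+t by linarith), ht]
      nlinarith
    have hfr : N^2 * (1/(((m+1:ℕ):ℝ)+1+t)) ≤ N^2 * (mahδ N/2) :=
      mul_le_mul_of_nonneg_left hfrac (by positivity)
    unfold cMah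
    linarith
  calc (2*s-1) * (N*S1 - N^2*S2) ≤ (2*s-1) * (-(cMah N)) :=
        mul_le_mul_of_nonneg_left hkey h2s
  _ = -(cMah N * (2*s-1)) := by ring
open Finset Real Filter Topology

noncomputable def mahH (N : ℝ) (m : ℕ) (s : ℝ) : ℝ :=
  ∑ j ∈ Finset.range (m+1),
    (Real.log (1 + N*s + j) + Real.log (N + 1 - N*s + j)
      - N * Real.log (1 + s + j) - N * Real.log (2 - s + j))


lemma mahH_hasDerivAt {N s : ℝ} (hN : 1 ≤ N) (hs0 : (1:ℝ)/2 ≤ s) (hs1 : s ≤ 1) (m : ℕ) :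
    HasDerivAt (mahH N m) (mahD N m s) s := by
  have hNpos : (0:ℝ) < N := by linarith
  unfold mahH mahD
  refine HasDerivAt.fun_sum (fun j _ => ?_)
  have p1 : (0:ℝ) < 1 + N*s + j := by
    have : (0:ℝ) ≤ N*s := by positivity
    have : (0:ℝ) ≤ (j:ℝ) := j.cast_nonneg
    linarith
  have p2 : (0:ℝ) < N + 1 - N*s + j := by
    have : N*s ≤ N := by nlinarith
    have : (0:ℝ) ≤ (j:ℝ) := j.cast_nonneg
    linarith
  have p3 : (0:ℝ) < 1 + s + j := by
    have : (0:ℝ) ≤ (j:ℝ) := j.cast_nonneg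
    linarith
  have p4 : (0:ℝ) < 2 - s + j := by
    have : (0:ℝ) ≤ (j:ℝ) := j.cast_nonneg
    linarith
  have d1 : HasDerivAt (fun s : ℝ => Real.log (1 + N*s + j)) (N/(1 + N*s + j)) s := by
    have : HasDerivAt (fun s : ℝ => 1 + N*s + j) N s := by
      simpa using ((hasDerivAt_id s).const_mul N).const_add 1 |>.add_const (j:ℝ)
    simpa using this.log (ne_of_gt p1)
  have d2 : HasDerivAt (fun s : ℝ => Real.log (N + 1 - N*s + j)) (-N/(N + 1 - N*s + j)) s := by
    have : HasDerivAt (fun s : ℝ => N + 1 - N*s + j) (-N) s := by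
      have h0 : HasDerivAt (fun s : ℝ => N*s) N s := by
        simpa using (hasDerivAt_id s).const_mul N
      simpa using ((h0.const_sub (N+1)).add_const (j:ℝ))
    simpa using this.log (ne_of_gt p2)
  have d3 : HasDerivAt (fun s : ℝ => Real.log (1 + s + j)) (1/(1 + s + j)) s := by
    have : HasDerivAt (fun s : ℝ => 1 + s + j) 1 s := by
      simpa using ((hasDerivAt_id s).const_add 1).add_const (j:ℝ)
    simpa using this.log (ne_of_gt p3)
  have d4 : HasDerivAt (fun s : ℝ => Real.log (2 - s + j)) (-1/(2 - s + j)) s := by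
    have : HasDerivAt (fun s : ℝ => 2 - s + j) (-1) s := by
      simpa using ((hasDerivAt_id s).const_sub 2).add_const (j:ℝ)
    simpa using this.log (ne_of_gt p4)
  have := ((d1.add d2).sub (d3.const_mul N)).sub (d4.const_mul N)
  refine this.congr_deriv ?_
  field_simp
  ring
open Finset Real Filter Topology

noncomputable def mahd (x : ℝ) (m : ℕ) : ℝ :=
  x * Real.log m + Real.log (Nat.factorial m) - ∑ j ∈ Finset.range (m+1), Real.log (x + j)

lemma log_Gamma_limit {x : ℝ} (hx : 0 < x) :
    Tendsto (fun m => mahd x m) atTop (𝓝 (Real.log (Real.Gamma x))) := by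
  have hG : Tendsto (fun m => Real.log (Real.GammaSeq x m)) atTop (𝓝 (Real.log (Real.Gamma x))) :=
    (Real.continuousAt_log (Real.Gamma_pos_of_pos hx).ne').tendsto.comp
      (Real.GammaSeq_tendsto_Gamma x)
  refine hG.congr' ?_
  filter_upwards [eventually_ge_atTop 1] with m hm
  have hprodpos : ∀ j ∈ Finset.range (m+1), (0:ℝ) < x + j := fun j _ => by
    have : (0:ℝ) ≤ (j:ℝ) := j.cast_nonneg
    linarith
  have hprod : (0:ℝ) < ∏ j ∈ Finset.range (m+1), (x + j) := Finset.prod_pos hprodpos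
  have hmpos : (0:ℝ) < (m:ℝ) := by exact_mod_cast hm
  have hfac : (0:ℝ) < (Nat.factorial m : ℝ) := by exact_mod_cast Nat.factorial_pos m
  have hrp : (0:ℝ) < (m:ℝ) ^ x := Real.rpow_pos_of_pos hmpos x
  unfold Real.GammaSeq mahd
  rw [Real.log_div (by positivity) hprod.ne', Real.log_mul hrp.ne' hfac.ne',
    Real.log_rpow hmpos, Real.log_prod (fun j hj => (hprodpos j hj).ne')]
section Core5
open Finset Real Filter Topology

noncomputable def mahG (N : ℝ) (s : ℝ) : ℝ :=
  N * Real.log (Real.Gamma (1 + s)) + N * Real.log (Real.Gamma (2 - s))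
    - Real.log (Real.Gamma (1 + N*s)) - Real.log (Real.Gamma (N + 1 - N*s))

lemma mahH_tendsto {N s1 s2 : ℝ} (hN : 2 ≤ N)
    (h1 : (1:ℝ)/2 ≤ s1) (h2 : s1 ≤ 1) (h3 : (1:ℝ)/2 ≤ s2) (h4 : s2 ≤ 1) :
    Tendsto (fun m => mahH N m s1 - mahH N m s2) atTop (𝓝 (mahG N s1 - mahG N s2)) := by
  have hNpos : (0:ℝ) < N := by linarith
  have pos : ∀ s : ℝ, (1:ℝ)/2 ≤ s → s ≤ 1 →
      (0:ℝ) < 1 + s ∧ (0:ℝ) < 2 - s ∧ (0:ℝ) < 1 + N*s ∧ (0:ℝ) < N + 1 - N*s := by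
    intro s hs0 hs1
    refine ⟨by linarith, by linarith, by nlinarith, by nlinarith⟩
  have key : ∀ s : ℝ, (1:ℝ)/2 ≤ s → s ≤ 1 →
      Tendsto (fun m => N * mahd (1+s) m + N * mahd (2-s) m
        - mahd (1+N*s) m - mahd (N+1-N*s) m) atTop (𝓝 (mahG N s)) := by
    intro s hs0 hs1
    obtain ⟨q1, q2, q3, q4⟩ := pos s hs0 hs1
    exact ((((log_Gamma_limit q1).const_mul N).add
      ((log_Gamma_limit q2).const_mul N)).sub (log_Gamma_limit q3)).sub (log_Gamma_limit q4)
  have keydiff := (key s1 h1 h2).sub (key s2 h3 h4)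
  refine keydiff.congr (fun m => ?_)
  unfold mahd mahH
  rw [Finset.sum_sub_distrib, Finset.sum_sub_distrib, Finset.sum_add_distrib,
      Finset.sum_sub_distrib, Finset.sum_sub_distrib, Finset.sum_add_distrib,
      ← Finset.mul_sum, ← Finset.mul_sum, ← Finset.mul_sum, ← Finset.mul_sum]
  ring

lemma mahG_lt {N : ℝ} (hN : 2 ≤ N) {s1 s2 : ℝ}
    (h1 : (1:ℝ)/2 ≤ s1) (h12 : s1 < s2) (h4 : s2 ≤ 1) :
    mahG N s2 < mahG N s1 := by
  have h2 : s1 ≤ 1 := by linarith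
  have h3 : (1:ℝ)/2 ≤ s2 := by linarith
  have hNpos : (0:ℝ) < N := by linarith
  have hδpos := mahδ_pos hN
  have hcpos := cMah_pos hN
  set c := cMah N with hc
  set m0 : ℕ := Nat.ceil (2/mahδ N) with hm0
  -- for m ≥ m0, the modified partial sums are antitone on [1/2,1]
  have anti : ∀ m : ℕ, m0 ≤ m →
      AntitoneOn (fun s => mahH N m s + c*(s^2 - s)) (Set.Icc ((1:ℝ)/2) 1) := by
    intro m hm
    have hm' : 2/mahδ N ≤ (m:ℝ) := le_trans (Nat.le_ceil _) (by exact_mod_cast hm)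
    have hd : ∀ x ∈ Set.Icc ((1:ℝ)/2) 1,
        HasDerivAt (fun s => mahH N m s + c*(s^2 - s)) (mahD N m x + c*(2*x - 1)) x := by
      intro x hx
      have hx1 := hx.1; have hx2 := hx.2
      have hH := mahH_hasDerivAt (by linarith : (1:ℝ) ≤ N) hx1 hx2 m
      have hpoly : HasDerivAt (fun s : ℝ => c*(s^2 - s)) (c*(2*x - 1)) x := by
        have := ((hasDerivAt_pow 2 x).sub (hasDerivAt_id x)).const_mul c
        refine this.congr_deriv ?_
        norm_num
      exact hH.add hpoly
    refine antitoneOn_of_deriv_nonpos (convex_Icc _ _) ?_ ?_ ?_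
    · exact fun x hx => (hd x hx).continuousAt.continuousWithinAt
    · intro x hx
      rw [interior_Icc] at hx
      exact ((hd x ⟨hx.1.le, hx.2.le⟩).differentiableAt).differentiableWithinAt
    · intro x hx
      rw [interior_Icc] at hx
      rw [(hd x ⟨hx.1.le, hx.2.le⟩).deriv]
      have := mahD_le hN hx.1.le hx.2.le hm'
      linarith
  set ε : ℝ := c * ((s2^2 - s2) - (s1^2 - s1)) with hε
  have hεpos : 0 < ε := by
    rw [hε]
    have : (s2^2 - s2) - (s1^2 - s1) = (s2 - s1)*(s2 + s1 - 1) := by ring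
    rw [this]
    have : 0 < s2 - s1 := by linarith
    have : 0 < s2 + s1 - 1 := by linarith
    positivity
  have hev : ∀ᶠ m in atTop, ε ≤ mahH N m s1 - mahH N m s2 := by
    filter_upwards [eventually_ge_atTop m0] with m hm
    have := anti m hm ⟨h1, h2⟩ ⟨h3, h4⟩ h12.le
    dsimp only at this
    rw [hε]
    linarith
  have hlim := mahH_tendsto hN h1 h2 h3 h4 (s1 := s1) (s2 := s2)
  have : ε ≤ mahG N s1 - mahG N s2 := ge_of_tendsto hlim hev
  linarith

end Core5


open MeasureTheory Finset Real
open scoped ENNReal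


-- polar of the l^p ball, case p > 1
lemma polar_ball_eq {n : ℕ} {p q : ℝ} (hpq : p.HolderConjugate q) (hp2 : p ≤ 2) :
    polarSet {y : Fin n → ℝ | ∑ i, |y i| ^ p < 1} = {x : Fin n → ℝ | ∑ i, |x i| ^ q ≤ 1} := by
  have hp1 : 1 < p := hpq.lt
  have hppos : 0 < p := hpq.pos
  have hq2 : 2 ≤ q := by
    rw [hpq.conjugate_eq]
    rw [le_div_iff₀ (by linarith)]
    nlinarith
  have hqpos : (0:ℝ) < q := by linarith
  ext x
  simp only [polarSet, Set.mem_setOf_eq]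
  constructor
  · intro hx
    by_contra hS
    push_neg at hS
    set S : ℝ := ∑ i, |x i| ^ q with hSdef
    have hS1 : 1 < S := hS
    have hSpos : 0 < S := by linarith
    set e : ℝ := (1/p + 1)/2 with he
    set c : ℝ := S ^ e with hc
    have hcpos : 0 < c := Real.rpow_pos_of_pos hSpos e
    have he1 : e < 1 := by
      rw [he]
      have : 1/p < 1 := by rw [div_lt_one hppos]; linarith
      linarith
    have hep : 1 < e * p := by
      rw [he]
      have : (1/p + 1)/2 * p = (1 + p)/2 := by field_simp
      rw [this]
      linarith
    have hcS : c < S := by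
      rw [hc]
      nth_rewrite 2 [show S = S ^ (1:ℝ) from (Real.rpow_one S).symm]
      exact Real.rpow_lt_rpow_of_exponent_lt hS1 he1
    have hcp : S < c ^ p := by
      rw [hc, ← Real.rpow_mul hSpos.le]
      nth_rewrite 1 [show S = S ^ (1:ℝ) from (Real.rpow_one S).symm]
      exact Real.rpow_lt_rpow_of_exponent_lt hS1 hep
    set y : Fin n → ℝ := fun i => |x i| ^ (q - 2) * x i / c with hy
    have habs : ∀ i, |y i| = |x i| ^ (q - 1) / c := by
      intro i
      rw [hy]
      simp only []
      rw [abs_div, abs_of_pos hcpos, abs_mul, abs_of_nonneg (Real.rpow_nonneg (abs_nonneg _) _)]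
      rcases eq_or_ne (x i) 0 with h0 | h0
      · rw [h0]
        simp only [abs_zero, mul_zero]
        rw [Real.zero_rpow (by linarith : q - 1 ≠ 0)]
      · have habspos : 0 < |x i| := abs_pos.mpr h0
        rw [show |x i| ^ (q-2) * |x i| = |x i| ^ (q-2) * |x i| ^ (1:ℝ) by rw [Real.rpow_one],
          ← Real.rpow_add habspos]
        ring_nf
    have hyball : ∑ i, |y i| ^ p < 1 := by
      have : ∀ i, |y i| ^ p = |x i| ^ q / c ^ p := by
        intro i
        rw [habs i, Real.div_rpow (Real.rpow_nonneg (abs_nonneg _) _) hcpos.le,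
          ← Real.rpow_mul (abs_nonneg _), hpq.symm.sub_one_mul_conj]
      rw [Finset.sum_congr rfl (fun i _ => this i), ← Finset.sum_div, ← hSdef,
        div_lt_one (Real.rpow_pos_of_pos hcpos p)]
      exact hcp
    have hfin := hx y hyball
    have hsum : ∑ i, y i * x i = S / c := by
      rw [hSdef, Finset.sum_div]
      refine Finset.sum_congr rfl (fun i _ => ?_)
      rw [hy]
      simp only []
      rcases eq_or_ne (x i) 0 with h0 | h0
      · rw [h0]
        simp only [abs_zero, mul_zero, zero_div, zero_mul, mul_zero]
        rw [Real.zero_rpow (by linarith : q ≠ 0)]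
        simp
      · have habspos : 0 < |x i| := abs_pos.mpr h0
        have : |x i| ^ (q-2) * x i / c * x i = |x i| ^ (q-2) * (x i * x i) / c := by ring
        rw [this, show x i * x i = |x i| ^ (2:ℝ) by
            rw [show (2:ℝ) = ((2:ℕ):ℝ) by norm_num, Real.rpow_natCast, sq_abs]; ring,
          ← Real.rpow_add habspos]
        ring_nf
    rw [hsum, div_le_one hcpos] at hfin
    linarith
  · intro hx y hy
    calc ∑ i, y i * x i ≤ (∑ i, |y i| ^ p) ^ (1/p) * (∑ i, |x i| ^ q) ^ (1/q) :=
          Real.inner_le_Lp_mul_Lq Finset.univ y x hpq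
    _ ≤ 1 * 1 := by
        apply mul_le_mul
        · apply Real.rpow_le_one (Finset.sum_nonneg (fun i _ => Real.rpow_nonneg (abs_nonneg _) _))
            (le_of_lt hy) (by positivity)
        · exact Real.rpow_le_one (Finset.sum_nonneg (fun i _ => Real.rpow_nonneg (abs_nonneg _) _))
            hx (by positivity)
        · positivity
        · norm_num
    _ = 1 := by norm_num


open MeasureTheory Finset Real
open scoped ENNReal


lemma polar_ball_one_eq {n : ℕ} :
    polarSet {y : Fin n → ℝ | ∑ i, |y i| ^ (1:ℝ) < 1} = {x : Fin n → ℝ | ∀ i, |x i| ≤ 1} := by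
  ext x
  simp only [polarSet, Set.mem_setOf_eq, Real.rpow_one]
  constructor
  · intro hx i0
    by_contra h
    push_neg at h
    have hx0 : x i0 ≠ 0 := by
      intro h0; rw [h0, abs_zero] at h; linarith
    have habs : 0 < |x i0| := abs_pos.mpr hx0
    set t : ℝ := 2 / (1 + |x i0|) with ht
    have htpos : 0 < t := by positivity
    have ht1 : t < 1 := by rw [ht, div_lt_one (by linarith)]; linarith
    set y : Fin n → ℝ := Pi.single i0 (t * (x i0 / |x i0|)) with hy
    have habs1 : |t * (x i0 / |x i0|)| = t := by
      rw [abs_mul]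
      have h1 : abs (x i0 / |x i0|) = 1 := by
        rw [abs_div, abs_abs, div_self (ne_of_gt habs)]
      rw [h1, mul_one, abs_of_pos htpos]
    have hys : ∑ j, |y j| < 1 := by
      have hterm : ∀ j, |y j| = if j = i0 then t else 0 := by
        intro j
        rcases eq_or_ne j i0 with hji | hji
        · rw [if_pos hji, hji, hy, Pi.single_eq_same, habs1]
        · rw [if_neg hji, hy, Pi.single_eq_of_ne hji, abs_zero]
      rw [Finset.sum_congr rfl (fun j _ => hterm j),
        Finset.sum_ite_eq' Finset.univ i0 (fun _ => t)]
      simpa using ht1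
    have hsum : ∑ j, y j * x j = t * |x i0| := by
      have hterm : ∀ j, y j * x j = if j = i0 then t * |x i0| else 0 := by
        intro j
        rcases eq_or_ne j i0 with hji | hji
        · rw [if_pos hji, hji, hy, Pi.single_eq_same]
          field_simp
          rw [sq_abs]
        · rw [if_neg hji, hy, Pi.single_eq_of_ne hji, zero_mul]
      rw [Finset.sum_congr rfl (fun j _ => hterm j),
        Finset.sum_ite_eq' Finset.univ i0 (fun _ => t * |x i0|)]
      simp
    have hle := hx y hys
    rw [hsum] at hle
    have : 1 < t * |x i0| := by
      rw [ht, div_mul_eq_mul_div, lt_div_iff₀ (by linarith)]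
      linarith
    linarith
  · intro hx y hy
    calc ∑ j, y j * x j ≤ ∑ j, |y j| := by
          refine Finset.sum_le_sum (fun j _ => ?_)
          calc y j * x j ≤ |y j * x j| := le_abs_self _
          _ = |y j| * |x j| := abs_mul _ _
          _ ≤ |y j| * 1 := mul_le_mul_of_nonneg_left (hx j) (abs_nonneg _)
          _ = |y j| := mul_one _
    _ ≤ 1 := le_of_lt hy

lemma volume_cube {n : ℕ} :
    volume {x : Fin n → ℝ | ∀ i, |x i| ≤ 1} = ENNReal.ofReal (2 ^ n) := by
  have hset : {x : Fin n → ℝ | ∀ i, |x i| ≤ 1} = Set.pi Set.univ (fun _ => Set.Icc (-1:ℝ) 1) := by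
    ext x
    rw [Set.mem_setOf_eq, Set.mem_univ_pi]
    exact forall_congr' fun i => abs_le.trans Set.mem_Icc.symm
  rw [hset, volume_pi_pi]
  simp only [Real.volume_Icc]
  rw [Finset.prod_const]
  norm_num

section Core8
open MeasureTheory Finset Real Filter Topology
open scoped ENNReal

noncomputable def mahVol (n : ℕ) (s : ℝ) : ℝ :=
  (2 * Real.Gamma (s + 1)) ^ n / Real.Gamma ((n:ℝ) * s + 1) *
    ((2 * Real.Gamma ((1 - s) + 1)) ^ n / Real.Gamma ((n:ℝ) * (1 - s) + 1))

lemma mahVol_pos {n : ℕ} {s : ℝ} (h1 : (1:ℝ)/2 ≤ s) (h2 : s ≤ 1) : 0 < mahVol n s := by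
  have g1 : 0 < Real.Gamma (s + 1) := Real.Gamma_pos_of_pos (by linarith)
  have g2 : 0 < Real.Gamma ((n:ℝ) * s + 1) := Real.Gamma_pos_of_pos (by
    have : (0:ℝ) ≤ (n:ℝ) * s := by positivity
    linarith)
  have g3 : 0 < Real.Gamma ((1 - s) + 1) := Real.Gamma_pos_of_pos (by linarith)
  have g4 : 0 < Real.Gamma ((n:ℝ) * (1 - s) + 1) := Real.Gamma_pos_of_pos (by
    have : (0:ℝ) ≤ (n:ℝ) * (1 - s) := by
      have : (0:ℝ) ≤ 1 - s := by linarith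
      positivity
    linarith)
  unfold mahVol
  positivity

lemma log_mahVol {n : ℕ} {s : ℝ} (h1 : (1:ℝ)/2 ≤ s) (h2 : s ≤ 1) :
    Real.log (mahVol n s) = 2*(n:ℝ)*Real.log 2 + mahG (n:ℝ) s := by
  have g1 : 0 < Real.Gamma (s + 1) := Real.Gamma_pos_of_pos (by linarith)
  have g2 : 0 < Real.Gamma ((n:ℝ) * s + 1) := Real.Gamma_pos_of_pos (by
    have : (0:ℝ) ≤ (n:ℝ) * s := by positivity
    linarith)
  have g3 : 0 < Real.Gamma ((1 - s) + 1) := Real.Gamma_pos_of_pos (by linarith)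
  have g4 : 0 < Real.Gamma ((n:ℝ) * (1 - s) + 1) := Real.Gamma_pos_of_pos (by
    have : (0:ℝ) ≤ (n:ℝ) * (1 - s) := by
      have : (0:ℝ) ≤ 1 - s := by linarith
      positivity
    linarith)
  have hb1 : (0:ℝ) < (2 * Real.Gamma (s + 1)) ^ n := by positivity
  have hb2 : (0:ℝ) < (2 * Real.Gamma ((1 - s) + 1)) ^ n := by positivity
  unfold mahVol mahG
  rw [Real.log_mul (by positivity) (by positivity),
    Real.log_div hb1.ne' g2.ne', Real.log_div hb2.ne' g4.ne',
    Real.log_pow, Real.log_pow,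
    Real.log_mul (by norm_num) g1.ne', Real.log_mul (by norm_num) g3.ne']
  rw [show s + 1 = 1 + s by ring, show (1 - s) + 1 = 2 - s by ring,
    show (n:ℝ) * s + 1 = 1 + (n:ℝ)*s by ring,
    show (n:ℝ) * (1 - s) + 1 = (n:ℝ) + 1 - (n:ℝ)*s by ring]
  ring

lemma mahVol_lt {n : ℕ} (hn : 2 ≤ n) {s1 s2 : ℝ}
    (h1 : (1:ℝ)/2 ≤ s1) (h12 : s1 < s2) (h2 : s2 ≤ 1) :
    mahVol n s2 < mahVol n s1 := by
  have hN : (2:ℝ) ≤ (n:ℝ) := by exact_mod_cast hn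
  have hG := mahG_lt hN h1 h12 h2
  have p1 : 0 < mahVol n s1 := mahVol_pos h1 (by linarith)
  have p2 : 0 < mahVol n s2 := mahVol_pos (by linarith) h2
  have hlog : Real.log (mahVol n s2) < Real.log (mahVol n s1) := by
    rw [log_mahVol (by linarith) h2, log_mahVol h1 (by linarith)]
    linarith
  calc mahVol n s2 = Real.exp (Real.log (mahVol n s2)) := (Real.exp_log p2).symm
  _ < Real.exp (Real.log (mahVol n s1)) := Real.exp_lt_exp.mpr hlog
  _ = mahVol n s1 := Real.exp_log p1

end Core8

section Core9
open MeasureTheory Finset Real Filter Topology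
open scoped ENNReal


lemma volume_lpBall_eq {n : ℕ} {p : ℝ≥0∞} (h1 : 1 ≤ p) (h2 : p ≤ 2) :
    volume (lpBall n p) =
      ENNReal.ofReal ((2 * Real.Gamma (1/p.toReal + 1)) ^ n /
        Real.Gamma ((n:ℝ) * (1/p.toReal) + 1)) := by
  have hne : p ≠ ⊤ := by
    intro h
    rw [h] at h2
    exact (by norm_num : ¬ ((⊤:ℝ≥0∞) ≤ 2)) h2
  have hpr : 1 ≤ p.toReal := by
    have := ENNReal.toReal_mono hne h1
    simpa using this
  rw [lpBall, if_neg hne, MeasureTheory.volume_sum_rpow_lt_one (Fin n) hpr]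
  congr 2
  · rw [Fintype.card_fin]
  · rw [Fintype.card_fin]
    ring

lemma volume_polar_lpBall_eq {n : ℕ} (hn : 2 ≤ n) {p : ℝ≥0∞} (h1 : 1 ≤ p) (h2 : p ≤ 2) :
    volume (polarSet (lpBall n p)) =
      ENNReal.ofReal ((2 * Real.Gamma ((1 - 1/p.toReal) + 1)) ^ n /
        Real.Gamma ((n:ℝ) * (1 - 1/p.toReal) + 1)) := by
  have hne : p ≠ ⊤ := by
    intro h
    rw [h] at h2
    exact (by norm_num : ¬ ((⊤:ℝ≥0∞) ≤ 2)) h2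
  have hpr : 1 ≤ p.toReal := by
    have := ENNReal.toReal_mono hne h1
    simpa using this
  have hpr2 : p.toReal ≤ 2 := by
    have := ENNReal.toReal_mono (by norm_num : (2:ℝ≥0∞) ≠ ⊤) h2
    simpa using this
  rw [lpBall, if_neg hne]
  rcases eq_or_lt_of_le hpr with hp1 | hp1
  · -- p.toReal = 1
    rw [← hp1, polar_ball_one_eq, volume_cube]
    norm_num [Real.Gamma_one]
  · -- 1 < p.toReal : conjugate exponent q
    set pr := p.toReal with hprdef
    set q := pr / (pr - 1) with hq
    have hpq : pr.HolderConjugate q := Real.HolderConjugate.conjExponent hp1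
    have hqpos : 0 < q := hpq.symm.pos
    have hq2 : 2 ≤ q := by
      rw [hq, le_div_iff₀ (by linarith)]
      nlinarith
    rw [polar_ball_eq hpq hpr2]
    have hsetq : {x : Fin n → ℝ | ∑ i, |x i| ^ q ≤ 1}
        = {x : Fin n → ℝ | (∑ i, |x i| ^ q) ^ (1/q : ℝ) ≤ 1} := by
      ext x
      have hnn : (0:ℝ) ≤ ∑ i, |x i| ^ q :=
        Finset.sum_nonneg (fun i _ => Real.rpow_nonneg (abs_nonneg _) _)
      simp only [Set.mem_setOf_eq]
      constructor
      · intro h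
        exact Real.rpow_le_one hnn h (by positivity)
      · intro h
        by_contra hcon
        push_neg at hcon
        have : 1 < (∑ i, |x i| ^ q) ^ (1/q : ℝ) :=
          Real.one_lt_rpow_iff_of_pos (by linarith) |>.mpr (Or.inl ⟨hcon, by positivity⟩)
        linarith
    have : Nonempty (Fin n) := ⟨⟨0, by omega⟩⟩
    rw [hsetq, MeasureTheory.volume_sum_rpow_le (Fin n) (by linarith : (1:ℝ) ≤ q) 1]
    rw [Fintype.card_fin]
    have e1 : 1/q = 1 - 1/pr := by
      rw [hq]
      field_simp
    have e2 : (n:ℝ)/q = (n:ℝ) * (1 - 1/pr) := by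
      rw [div_eq_mul_one_div, e1]
    rw [e1, e2]
    simp

/-- For every integer `n ≥ 2`, the Mahler volume `p ↦ Vol(B^n_p)·Vol((B^n_p)°)`
is strictly monotone increasing on the interval `[1, 2]`. -/
theorem mahler_volume_lpBall_strictMonoOn (n : ℕ) (hn : 2 ≤ n) :
    StrictMonoOn (fun p : ℝ≥0∞ => volume (lpBall n p) * volume (polarSet (lpBall n p)))
      (Set.Icc (1 : ℝ≥0∞) 2) := by
  intro p1 hp1 p2 hp2 hlt
  obtain ⟨hp11, hp12⟩ := hp1
  obtain ⟨hp21, hp22⟩ := hp2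
  have hne1 : p1 ≠ ⊤ := by
    intro h; rw [h] at hp12; exact (by norm_num : ¬ ((⊤:ℝ≥0∞) ≤ 2)) hp12
  have hne2 : p2 ≠ ⊤ := by
    intro h; rw [h] at hp22; exact (by norm_num : ¬ ((⊤:ℝ≥0∞) ≤ 2)) hp22
  have hr11 : 1 ≤ p1.toReal := by simpa using ENNReal.toReal_mono hne1 hp11
  have hr12 : p1.toReal ≤ 2 := by
    simpa using ENNReal.toReal_mono (by norm_num : (2:ℝ≥0∞) ≠ ⊤) hp12
  have hr21 : 1 ≤ p2.toReal := by simpa using ENNReal.toReal_mono hne2 hp21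
  have hr22 : p2.toReal ≤ 2 := by
    simpa using ENNReal.toReal_mono (by norm_num : (2:ℝ≥0∞) ≠ ⊤) hp22
  have hrlt : p1.toReal < p2.toReal := ENNReal.toReal_strict_mono hne2 hlt
  set s1 := 1/p1.toReal with hs1
  set s2 := 1/p2.toReal with hs2
  have hs2lt : s2 < s1 := by
    rw [hs1, hs2]
    exact one_div_lt_one_div_of_lt (by linarith) hrlt
  have hs11 : s1 ≤ 1 := by
    rw [hs1]; rw [div_le_one (by linarith)]; linarith
  have hs22 : (1:ℝ)/2 ≤ s2 := by
    rw [hs2]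
    exact one_div_le_one_div_of_le (by linarith) hr22
  have key : ∀ p : ℝ≥0∞, 1 ≤ p → p ≤ 2 →
      volume (lpBall n p) * volume (polarSet (lpBall n p))
        = ENNReal.ofReal (mahVol n (1/p.toReal)) := by
    intro p h1 h2
    rw [volume_lpBall_eq h1 h2, volume_polar_lpBall_eq hn h1 h2,
      ← ENNReal.ofReal_mul (by positivity)]
    rfl
  change volume (lpBall n p1) * volume (polarSet (lpBall n p1))
      < volume (lpBall n p2) * volume (polarSet (lpBall n p2))
  rw [key p1 hp11 hp12, key p2 hp21 hp22]
  rw [ENNReal.ofReal_lt_ofReal_iff (mahVol_pos hs22 (by linarith))]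
  exact mahVol_lt hn hs22 hs2lt hs11

end Core9
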